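/- Let n, δ ∈ ℕ with δ ≥ 3 and n ≥ 8. If G is a connected, triangle-free graph of order n, minimum degree δ and diameter d, then π(G) ≥ δ(d−4)(d−1)/(8(n−1)). -/

import Mathlib

lemma sum_arith (A : ℤ) (P : ℕ) :
    ∑ s ∈ Finset.range P, (A - 4*(s:ℤ)) = P*A - 2*P*(P-1) := by
  induction P with
  | zero => simp
  | succ m ih => rw [Finset.sum_range_succ, ih]; push_cast; ring

lemma arith_key (P Q r q : ℤ) (hP : 1 ≤ P) (hQ : 1 ≤ Q) (hr : 0 ≤ r) (hr3 : r ≤ 3)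
    (hq : 0 ≤ q) (hq3 : q ≤ 3) :
    (4*P+r-1 + (4*Q+q-1) - 4)*(4*P+r-1 + (4*Q+q-1) - 1)
      ≤ 16*(P*((4*P+r-1)-2) - 2*P*(P-1) + Q*((4*Q+q-1)-2) - 2*Q*(Q-1)) := by
  nlinarith [sq_nonneg (P-Q), sq_nonneg (r-q), mul_nonneg hr hq, sq_nonneg (4*P-4*Q+r-q),
    mul_pos (by linarith : (0:ℤ) < P) (by linarith : (0:ℤ) < Q)]

lemma arith_left (a Q q : ℤ) (ha0 : 0 ≤ a) (ha : a ≤ 2) (hQ : 1 ≤ Q) (hq : 0 ≤ q) (hq3 : q ≤ 3) :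
    (a + (4*Q+q-1) - 4)*(a + (4*Q+q-1) - 1) ≤ 16*(Q*((4*Q+q-1)-2) - 2*Q*(Q-1)) := by
  nlinarith [sq_nonneg (a+q-5), mul_nonneg hq ha0, sq_nonneg Q,
    mul_pos (by linarith : (0:ℤ) < Q) (by linarith : (0:ℤ) < Q)]

lemma walk_dist_le {V : Type*} {G : SimpleGraph V} (hconn : G.Connected) {u v : V}
    (p : G.Walk u v) (j : ℕ) : G.dist u (p.getVert j) ≤ j := by
  induction j with
  | zero => simp [SimpleGraph.Walk.getVert_zero, SimpleGraph.dist_self]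
  | succ m ih =>
    rcases lt_or_ge m p.length with hm | hm
    · have hadj := p.adj_getVert_succ hm
      have h1 : G.dist (p.getVert m) (p.getVert (m+1)) ≤ 1 := by
        simpa using SimpleGraph.dist_le (SimpleGraph.Walk.cons hadj SimpleGraph.Walk.nil)
      have h2 := hconn.dist_triangle (u := u) (v := p.getVert m) (w := p.getVert (m+1))
      omega
    · rw [p.getVert_of_length_le (by omega : p.length ≤ m + 1),
        ← p.getVert_of_length_le hm]
      omega

lemma core {V : Type*} [Fintype V] [DecidableEq V] (G : SimpleGraph V) [DecidableRel G.Adj]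
    (hconn : G.Connected) (htf : G.CliqueFree 3) (d : ℕ) (x y : V) (hxy : G.dist x y = d)
    (hd5 : 5 ≤ d) (hbd : ∀ u w : V, G.dist u w ≤ d) (v : V) :
    ((d:ℤ)-4)*((d:ℤ)-1) * G.minDegree ≤ 8 * ∑ w : V, (G.dist v w : ℤ) := by
  classical
  set δ := G.minDegree with hδdef
  obtain ⟨p, hp⟩ := hconn.exists_walk_length_eq_dist x y
  rw [hxy] at hp
  set f : ℕ → V := p.getVert with hf
  set a := G.dist x v with ha
  have haD : a ≤ d := hbd x v
  -- distance of getVert from x and y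
  have hup : ∀ j, G.dist x (f j) ≤ j := fun j => walk_dist_le hconn p j
  have hdown : ∀ j, j ≤ d → G.dist y (f j) ≤ d - j := by
    intro j hj
    have := walk_dist_le hconn p.reverse (d - j)
    rwa [SimpleGraph.Walk.getVert_reverse, hp, (by omega : d - (d - j) = j)] at this
  have hlow : ∀ j, j ≤ d → j ≤ G.dist x (f j) := by
    intro j hj
    have h1 := hconn.dist_triangle (u := x) (v := f j) (w := y)
    have h2 : G.dist (f j) y = G.dist y (f j) := SimpleGraph.dist_comm
    have h3 := hdown j hj
    omega
  -- blocks
  set B : ℕ → Finset V := fun j => G.neighborFinset (f j) ∪ G.neighborFinset (f (j+1)) with hB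
  have hadj : ∀ j, j < d → G.Adj (f j) (f (j+1)) := by
    intro j hj; exact p.adj_getVert_succ (by omega)
  have hBcard : ∀ j, j < d → 2*δ ≤ (B j).card := by
    intro j hj
    have hdisj : Disjoint (G.neighborFinset (f j)) (G.neighborFinset (f (j+1))) := by
      rw [Finset.disjoint_left]
      intro w hw1 hw2
      rw [SimpleGraph.mem_neighborFinset] at hw1 hw2
      exact htf {f j, f (j+1), w} (SimpleGraph.is3Clique_triple_iff.mpr ⟨hadj j hj, hw1, hw2⟩)
    rw [hB]
    simp only []
    rw [Finset.card_union_of_disjoint hdisj]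
    have h1 := G.minDegree_le_degree (f j)
    have h2 := G.minDegree_le_degree (f (j+1))
    rw [← SimpleGraph.card_neighborFinset_eq_degree] at h1 h2
    omega
  -- distance bounds for block members
  have hxw : ∀ j, j < d → ∀ w ∈ B j, G.dist x w ≤ j + 2 ∧ j ≤ G.dist x w + 1 := by
    intro j hj w hw
    rw [hB, Finset.mem_union, SimpleGraph.mem_neighborFinset, SimpleGraph.mem_neighborFinset] at hw
    have key : ∀ j', j' ≤ d → G.Adj (f j') w → G.dist x w ≤ j' + 1 ∧ j' ≤ G.dist x w + 1 := by
      intro j' hj' hadj'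
      have h1 : G.dist (f j') w ≤ 1 := by
        simpa using SimpleGraph.dist_le (SimpleGraph.Walk.cons hadj' SimpleGraph.Walk.nil)
      have h2 : G.dist w (f j') ≤ 1 := by rw [SimpleGraph.dist_comm]; exact h1
      have t1 := hconn.dist_triangle (u := x) (v := f j') (w := w)
      have t2 := hconn.dist_triangle (u := x) (v := w) (w := f j')
      have := hup j'
      have := hlow j' hj'
      omega
    rcases hw with hw | hw
    · have := key j (by omega) hw; omega
    · have := key (j+1) (by omega) hw; omega
  have hvw : ∀ j, j < d → ∀ w ∈ B j,
      ((a:ℤ) - (j+2) ≤ G.dist v w) ∧ ((j:ℤ) - 1 - a ≤ G.dist v w) := by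
    intro j hj w hw
    obtain ⟨e1, e2⟩ := hxw j hj w hw
    have t1 := hconn.dist_triangle (u := x) (v := w) (w := v)
    have t2 := hconn.dist_triangle (u := x) (v := v) (w := w)
    have hc1 : G.dist w v = G.dist v w := SimpleGraph.dist_comm
    rw [← ha] at t1 t2
    constructor <;> [skip; skip] <;> push_cast <;> omega
  -- generic sum machinery
  have main : ∀ T : Finset ℕ, (∀ j ∈ T, j < d) →
      (∀ j ∈ T, ∀ j' ∈ T, j < j' → j + 4 ≤ j') →
      ∀ c : ℕ → ℤ, (∀ j ∈ T, 0 ≤ c j) → (∀ j ∈ T, ∀ w ∈ B j, c j ≤ G.dist v w) →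
      (2*(δ:ℤ)) * ∑ j ∈ T, c j ≤ ∑ w : V, (G.dist v w : ℤ) := by
    intro T hTd hTgap c hc0 hcle
    have hdisjB : (T : Set ℕ).PairwiseDisjoint B := by
      intro j hj j' hj' hne
      simp only [Finset.mem_coe] at hj hj'
      have hgap : j + 4 ≤ j' ∨ j' + 4 ≤ j := by
        rcases lt_trichotomy j j' with h | h | h
        · exact Or.inl (hTgap j hj j' hj' h)
        · exact absurd h hne
        · exact Or.inr (hTgap j' hj' j hj h)
      have key : ∀ i i' : ℕ, i ∈ T → i' ∈ T → i + 4 ≤ i' → Disjoint (B i) (B i') := by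
        intro i i' hi hi' hii
        rw [Finset.disjoint_left]
        intro w hw1 hw2
        obtain ⟨e1, _⟩ := hxw i (hTd i hi) w hw1
        obtain ⟨_, e2⟩ := hxw i' (hTd i' hi') w hw2
        omega
      rcases hgap with h | h
      · exact key j j' hj hj' h
      · exact (key j' j hj' hj h).symm
    calc (2*(δ:ℤ)) * ∑ j ∈ T, c j = ∑ j ∈ T, (2*(δ:ℤ)) * c j := by rw [Finset.mul_sum]
      _ ≤ ∑ j ∈ T, ∑ w ∈ B j, (G.dist v w : ℤ) := by
          apply Finset.sum_le_sum
          intro j hj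
          have h1 : ((B j).card : ℤ) * c j ≤ ∑ w ∈ B j, (G.dist v w : ℤ) := by
            have := Finset.card_nsmul_le_sum (B j) (fun w => (G.dist v w : ℤ)) (c j)
              (fun w hw => hcle j hj w hw)
            simpa [nsmul_eq_mul] using this
          have h2 : (2*(δ:ℤ)) * c j ≤ ((B j).card : ℤ) * c j := by
            apply mul_le_mul_of_nonneg_right _ (hc0 j hj)
            exact_mod_cast hBcard j (hTd j hj)
          linarith
      _ = ∑ w ∈ T.biUnion B, (G.dist v w : ℤ) := (Finset.sum_biUnion hdisjB).symm
      _ ≤ ∑ w : V, (G.dist v w : ℤ) := by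
          apply Finset.sum_le_sum_of_subset_of_nonneg (Finset.subset_univ _)
          intro w _ _; positivity
  -- the cost function
  set c : ℕ → ℤ := fun j => if j ≤ a then (a:ℤ) - j - 2 else (j:ℤ) - 1 - a with hcdef
  set b := d - a with hbdef
  have hab : a + b = d := by omega
  -- left and right index families
  set P : ℕ := if 3 ≤ a then (a-3)/4 + 1 else 0 with hPdef
  set Q : ℕ := if 3 ≤ b then (b-3)/4 + 1 else 0 with hQdef
  have hPfact : ∀ s, s < P → 4*s + 3 ≤ a := by
    intro s hs
    rw [hPdef] at hs
    split at hs
    · next h3 =>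
      have hdm := Nat.div_add_mod (a-3) 4
      have : s ≤ (a-3)/4 := by omega
      omega
    · omega
  have hQfact : ∀ s, s < Q → 4*s + 3 ≤ b := by
    intro s hs
    rw [hQdef] at hs
    split at hs
    · next h3 =>
      have hdm := Nat.div_add_mod (b-3) 4
      have : s ≤ (b-3)/4 := by omega
      omega
    · omega
  set TL : Finset ℕ := (Finset.range P).image (fun s => 4*s) with hTL
  set TR : Finset ℕ := (Finset.range Q).image (fun s => d-1-4*s) with hTR
  have hTLmem : ∀ j ∈ TL, ∃ s, s < P ∧ j = 4*s := by
    intro j hj; rw [hTL] at hj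
    simp only [Finset.mem_image, Finset.mem_range] at hj
    obtain ⟨s, hs, rfl⟩ := hj; exact ⟨s, hs, rfl⟩
  have hTRmem : ∀ j ∈ TR, ∃ s, s < Q ∧ j = d-1-4*s := by
    intro j hj; rw [hTR] at hj
    simp only [Finset.mem_image, Finset.mem_range] at hj
    obtain ⟨s, hs, rfl⟩ := hj; exact ⟨s, hs, rfl⟩
  have hTLbd : ∀ j ∈ TL, j + 3 ≤ a := by
    intro j hj; obtain ⟨s, hs, rfl⟩ := hTLmem j hj; have := hPfact s hs; omega
  have hTRbd : ∀ j ∈ TR, a + 2 ≤ j ∧ j < d := by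
    intro j hj; obtain ⟨s, hs, rfl⟩ := hTRmem j hj; have := hQfact s hs; omega
  set T : Finset ℕ := TL ∪ TR with hT
  have hTd : ∀ j ∈ T, j < d := by
    intro j hj; rw [hT, Finset.mem_union] at hj
    rcases hj with hj | hj
    · have := hTLbd j hj; omega
    · exact (hTRbd j hj).2
  have hTgap : ∀ j ∈ T, ∀ j' ∈ T, j < j' → j + 4 ≤ j' := by
    intro j hj j' hj' hlt
    rw [hT, Finset.mem_union] at hj hj'
    rcases hj with hj | hj <;> rcases hj' with hj' | hj'
    · obtain ⟨s, hs, rfl⟩ := hTLmem j hj; obtain ⟨s', hs', rfl⟩ := hTLmem j' hj'; omega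
    · have := hTLbd j hj; have := (hTRbd j' hj').1; omega
    · have := (hTRbd j hj).1; have := hTLbd j' hj'; omega
    · obtain ⟨s, hs, rfl⟩ := hTRmem j hj; obtain ⟨s', hs', rfl⟩ := hTRmem j' hj'
      have := hQfact s hs; have := hQfact s' hs'; omega
  have hc0 : ∀ j ∈ T, 0 ≤ c j := by
    intro j hj; rw [hT, Finset.mem_union] at hj
    simp only [hcdef]
    rcases hj with hj | hj
    · have := hTLbd j hj; rw [if_pos (by omega)]; push_cast; omega
    · have := (hTRbd j hj).1; rw [if_neg (by omega)]; push_cast; omega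
  have hcle : ∀ j ∈ T, ∀ w ∈ B j, c j ≤ G.dist v w := by
    intro j hj w hw
    obtain ⟨e1, e2⟩ := hvw j (hTd j hj) w hw
    rw [hT, Finset.mem_union] at hj
    simp only [hcdef]
    rcases hj with hj | hj
    · rw [if_pos (by have := hTLbd j hj; omega)]; push_cast; omega
    · rw [if_neg (by have := (hTRbd j hj).1; omega)]; push_cast; omega
  have hmain := main T hTd hTgap c hc0 hcle
  -- compute the sum
  have hTLR : Disjoint TL TR := by
    rw [Finset.disjoint_left]
    intro j hj hj'
    have := hTLbd j hj; have := (hTRbd j hj').1; omega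
  have hsumL : ∑ j ∈ TL, c j = (P:ℤ)*((a:ℤ)-2) - 2*P*(P-1) := by
    rw [hTL, Finset.sum_image (by intro s _ s' _ h; simp only at h; omega)]
    rw [← sum_arith ((a:ℤ)-2) P]
    apply Finset.sum_congr rfl
    intro s hs
    rw [Finset.mem_range] at hs
    have := hPfact s hs
    simp only [hcdef]
    rw [if_pos (by omega)]
    push_cast; ring
  have hsumR : ∑ j ∈ TR, c j = (Q:ℤ)*((b:ℤ)-2) - 2*Q*(Q-1) := by
    rw [hTR, Finset.sum_image (by
      intro s hs s' hs' h
      rw [Finset.mem_coe, Finset.mem_range] at hs hs'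
      simp only at h
      have := hQfact s hs; have := hQfact s' hs'; omega)]
    rw [← sum_arith ((b:ℤ)-2) Q]
    apply Finset.sum_congr rfl
    intro s hs
    rw [Finset.mem_range] at hs
    have := hQfact s hs
    simp only [hcdef]
    rw [if_neg (by omega)]
    have h1 : ((d - 1 - 4*s : ℕ) : ℤ) = (d:ℤ) - 1 - 4*s := by push_cast; omega
    rw [h1]
    have h2 : ((b:ℤ)) = (d:ℤ) - a := by push_cast; omega
    rw [h2]; ring
  have hsumT : ∑ j ∈ T, c j = (P:ℤ)*((a:ℤ)-2) - 2*P*(P-1) + ((Q:ℤ)*((b:ℤ)-2) - 2*Q*(Q-1)) := by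
    rw [hT, Finset.sum_union hTLR, hsumL, hsumR]
  -- the arithmetic inequality
  have hkey : ((d:ℤ)-4)*((d:ℤ)-1) ≤ 16 * ∑ j ∈ T, c j := by
    rw [hsumT]
    have hdab : (d:ℤ) = (a:ℤ) + (b:ℤ) := by push_cast; omega
    rcases le_or_gt 3 a with h3a | h3a <;> rcases le_or_gt 3 b with h3b | h3b
    · -- main case
      have hdm := Nat.div_add_mod (a-3) 4
      have hdm' := Nat.div_add_mod (b-3) 4
      have hPval : P = (a-3)/4 + 1 := by rw [hPdef, if_pos h3a]
      have hQval : Q = (b-3)/4 + 1 := by rw [hQdef, if_pos h3b]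
      have hPa : (a:ℤ) = 4*(P:ℤ) + ((a-3) % 4 : ℕ) - 1 := by
        rw [hPval]; push_cast; omega
      have hQb : (b:ℤ) = 4*(Q:ℤ) + ((b-3) % 4 : ℕ) - 1 := by
        rw [hQval]; push_cast; omega
      have := arith_key (P:ℤ) (Q:ℤ) ((a-3) % 4 : ℕ) ((b-3) % 4 : ℕ)
        (by rw [hPval]; push_cast; omega) (by rw [hQval]; push_cast; omega)
        (by positivity) (by exact_mod_cast Nat.le_of_lt_succ (Nat.mod_lt _ (by omega)))
        (by positivity) (by exact_mod_cast Nat.le_of_lt_succ (Nat.mod_lt _ (by omega)))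
      rw [hdab, hPa, hQb]
      linarith
    · -- b ≤ 2, so a ≥ 3 : only left blocks; Q = 0
      have hQ0 : Q = 0 := by rw [hQdef, if_neg (by omega)]
      have hdm := Nat.div_add_mod (a-3) 4
      have hPval : P = (a-3)/4 + 1 := by rw [hPdef, if_pos h3a]
      have hPa : (a:ℤ) = 4*(P:ℤ) + ((a-3) % 4 : ℕ) - 1 := by rw [hPval]; push_cast; omega
      have := arith_left (b:ℤ) (P:ℤ) ((a-3) % 4 : ℕ)
        (by positivity) (by push_cast; omega) (by rw [hPval]; push_cast; omega)
        (by positivity) (by exact_mod_cast Nat.le_of_lt_succ (Nat.mod_lt _ (by omega)))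
      rw [hdab, hPa, hQ0]
      push_cast at this ⊢
      linarith
    · -- a ≤ 2, so b ≥ 3 : only right blocks; P = 0
      have hP0 : P = 0 := by rw [hPdef, if_neg (by omega)]
      have hdm := Nat.div_add_mod (b-3) 4
      have hQval : Q = (b-3)/4 + 1 := by rw [hQdef, if_pos h3b]
      have hQb : (b:ℤ) = 4*(Q:ℤ) + ((b-3) % 4 : ℕ) - 1 := by rw [hQval]; push_cast; omega
      have := arith_left (a:ℤ) (Q:ℤ) ((b-3) % 4 : ℕ)
        (by positivity) (by push_cast; omega) (by rw [hQval]; push_cast; omega)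
        (by positivity) (by exact_mod_cast Nat.le_of_lt_succ (Nat.mod_lt _ (by omega)))
      rw [hdab, hQb, hP0]
      push_cast at this ⊢
      linarith
    · omega
  -- put together
  have hS0 : 0 ≤ ∑ j ∈ T, c j := Finset.sum_nonneg hc0
  have hδ0 : (0:ℤ) ≤ (δ:ℤ) := by positivity
  nlinarith [mul_le_mul_of_nonneg_left hkey hδ0, hmain, hS0]

theorem stmt11 {V : Type*} [Fintype V] [DecidableEq V] (G : SimpleGraph V)
    [DecidableRel G.Adj] (n δ d : ℕ) (hn : Fintype.card V = n) (hδ : G.minDegree = δ) (hconn : G.Connected) (h3 : 3 ≤ δ) (h8 : 8 ≤ n) (htf : G.CliqueFree 3)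
    (hd : (Finset.univ.sup fun v : V => Finset.univ.sup fun w : V => G.dist v w) = d) :
    (δ : ℝ) * ((d : ℝ) - 4) * ((d : ℝ) - 1) / (8 * ((n : ℝ) - 1)) ≤ (⨅ v : V, (∑ w : V, (G.dist v w : ℝ)) / ((n : ℝ) - 1)) := by
  have hne : Nonempty V := by
    rw [← Fintype.card_pos_iff, hn]; omega
  have hn1 : (0:ℝ) < (n:ℝ) - 1 := by
    have : (8:ℝ) ≤ (n:ℝ) := by exact_mod_cast h8
    linarith
  have hbd : ∀ u w : V, G.dist u w ≤ d := by
    intro u w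
    calc G.dist u w ≤ Finset.univ.sup fun w : V => G.dist u w :=
          Finset.le_sup (Finset.mem_univ w)
      _ ≤ Finset.univ.sup fun v : V => Finset.univ.sup fun w : V => G.dist v w :=
          Finset.le_sup (f := fun v : V => Finset.univ.sup fun w : V => G.dist v w)
            (Finset.mem_univ u)
      _ = d := hd
  have hd1 : 1 ≤ d := by
    have h2 : 1 < Fintype.card V := by omega
    obtain ⟨u, w, huw⟩ := Fintype.exists_pair_of_one_lt_card h2
    have := hconn.pos_dist_of_ne huw
    have := hbd u w
    omega
  rcases le_or_gt d 4 with hd4 | hd5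
  · -- LHS nonpositive, RHS nonneg
    have hL : (δ : ℝ) * ((d : ℝ) - 4) * ((d : ℝ) - 1) / (8 * ((n : ℝ) - 1)) ≤ 0 := by
      apply div_nonpos_of_nonpos_of_nonneg
      · have h4 : ((d:ℝ) - 4) ≤ 0 := by
          have : (d:ℝ) ≤ 4 := by exact_mod_cast hd4
          linarith
        have h1 : (0:ℝ) ≤ (d:ℝ) - 1 := by
          have : (1:ℝ) ≤ (d:ℝ) := by exact_mod_cast hd1
          linarith
        have hδ0 : (0:ℝ) ≤ (δ:ℝ) := by positivity
        nlinarith [mul_nonneg (mul_nonneg hδ0 h1) (by linarith : (0:ℝ) ≤ 4 - (d:ℝ))]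
      · linarith
    refine hL.trans (le_ciInf fun v => ?_)
    apply div_nonneg _ (by linarith)
    apply Finset.sum_nonneg
    intro w _
    positivity
  · -- main case
    obtain ⟨x, -, hx⟩ := Finset.exists_mem_eq_sup Finset.univ Finset.univ_nonempty
      (fun v : V => Finset.univ.sup fun w : V => G.dist v w)
    obtain ⟨y, -, hy⟩ := Finset.exists_mem_eq_sup Finset.univ Finset.univ_nonempty
      (fun w : V => G.dist x w)
    have hxy : G.dist x y = d := by rw [← hd, hx, ← hy]
    apply le_ciInf
    intro v
    have hcore := core G hconn htf d x y hxy (by omega) hbd v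
    rw [hδ] at hcore
    have hcast : ((d:ℝ)-4)*((d:ℝ)-1) * (δ:ℝ) ≤ 8 * ∑ w : V, (G.dist v w : ℝ) := by
      have h : ((((d:ℤ)-4)*((d:ℤ)-1)*(δ:ℤ) : ℤ) : ℝ) ≤ ((8 * ∑ w : V, (G.dist v w : ℤ) : ℤ) : ℝ) :=
        Int.cast_le.mpr hcore
      push_cast at h
      linarith
    rw [div_le_div_iff₀ (by positivity) hn1]
    calc (δ:ℝ) * ((d:ℝ)-4) * ((d:ℝ)-1) * ((n:ℝ)-1)
        ≤ (8 * ∑ w : V, (G.dist v w : ℝ)) * ((n:ℝ)-1) := by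
          apply mul_le_mul_of_nonneg_right _ (le_of_lt hn1)
          linarith [hcast]
      _ = (∑ w : V, (G.dist v w : ℝ)) * (8 * ((n:ℝ)-1)) := by ring
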